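/- arXiv:0909.0537 — 5 statements merged into one kernel-verified Lean document; each statement's English description precedes it below -/
import Mathlib

section
/- Let S = (X, R) and T = (X, R') be set systems (range spaces) of VC dimension δ and δ' respectively, with δ, δ' > 1. Define the intersection system Ŝ = (X, R̂) where R̂ = { r ∩ r' : r ∈ R, r' ∈ R' }. Then the VC dimension of Ŝ is O(δ + δ'); concretely, it is at most c(δ + δ') for some absolute constant c. -/
/-- A finite set `A` is shattered by a family of ranges `R`. -/
def ShattersSys {X : Type*} (R : Set (Set X)) (A : Finset X) : Prop :=
  ∀ B ⊆ A, ∃ r ∈ R, (B : Set X) = r ∩ (A : Set X)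

/-- The VC dimension of the set system `(X, R)` is at most `n`. -/
def VCDimLE {X : Type*} (R : Set (Set X)) (n : ℕ) : Prop :=
  ∀ A : Finset X, ShattersSys R A → A.card ≤ n

open Finset

/-- geometric-like sum of floored halves -/
lemma geom_div (N : ℕ) : ∀ m : ℕ, (∑ j ∈ range m, N / 2 ^ (j + 1)) + N / 2 ^ m ≤ N
  | 0 => by simp
  | (m + 1) => by
      have h2 : N / 2 ^ (m + 1) + N / 2 ^ (m + 1) ≤ N / 2 ^ m := by
        have he : N / 2 ^ (m + 1) = N / 2 ^ m / 2 := by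
          rw [pow_succ, Nat.div_div_eq_div_mul]
        have := Nat.div_mul_le_self (N / 2 ^ m) 2
        omega
      have ih := geom_div N m
      rw [Finset.sum_range_succ]
      omega

lemma geom_div' (N m : ℕ) : (∑ j ∈ range m, N / 2 ^ (j + 1)) ≤ N :=
  le_trans (Nat.le_add_right _ _) (geom_div N m)

lemma geom_div'' (N m : ℕ) : (∑ j ∈ range m, N / 2 ^ j) ≤ 2 * N := by
  cases m with
  | zero => simp
  | succ m =>
      rw [Finset.sum_range_succ' (fun j => N / 2 ^ j)]
      have := geom_div' N m
      simp only [pow_zero, Nat.div_one]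
      omega

lemma two_pow_le_factorial_succ (k : ℕ) : 2 ^ k ≤ Nat.factorial (k+1) := by
  induction k with
  | zero => simp
  | succ k ih =>
      rw [pow_succ, Nat.factorial_succ]
      calc 2 ^ k * 2 ≤ Nat.factorial (k+1) * 2 := by gcongr
        _ ≤ (k + 1 + 1) * Nat.factorial (k+1) := by rw [mul_comm]; gcongr; omega

/-- (n+1)^D ≤ 2 n^D  when 2D ≤ n -/
lemma succ_pow_le_two_mul (D n : ℕ) (h : 2 * D ≤ n) : (n + 1) ^ D ≤ 2 * n ^ D := by
  rcases Nat.eq_zero_or_pos D with rfl | hD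
  · simp
  have hn : 0 < n := by omega
  have expand : (n + 1) ^ D = ∑ k ∈ range (D + 1), n ^ (D - k) * D.choose k := by
    have := add_pow 1 n D
    simp only [one_pow, one_mul, Nat.cast_id] at this
    rw [add_comm 1 n] at this
    rw [this]

  rw [expand]
  have hterm : ∀ k ∈ range (D + 1), n ^ (D - k) * D.choose k ≤ n ^ D / 2 ^ k := by
    intro k hk
    rw [Finset.mem_range] at hk
    rw [Nat.le_div_iff_mul_le (Nat.pow_pos (n := k) (by norm_num))]
    calc n ^ (D - k) * D.choose k * 2 ^ k ≤ n ^ (D - k) * D ^ k * 2 ^ k := by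
          gcongr; exact Nat.choose_le_pow D k
      _ = n ^ (D - k) * (2 * D) ^ k := by rw [mul_pow]; ring
      _ ≤ n ^ (D - k) * n ^ k := by gcongr
      _ = n ^ D := by rw [← pow_add]; congr 1; omega
  calc (∑ k ∈ range (D + 1), n ^ (D - k) * D.choose k)
      ≤ ∑ k ∈ range (D + 1), n ^ D / 2 ^ k := Finset.sum_le_sum hterm
    _ ≤ 2 * n ^ D := geom_div'' (n ^ D) (D + 1)

/-- (d+1)^d ≤ 3 d^d -/
lemma succ_pow_le_three_mul (d : ℕ) : (d + 1) ^ d ≤ 3 * d ^ d := by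
  rcases Nat.eq_zero_or_pos d with rfl | hd
  · simp
  have expand : (d + 1) ^ d = ∑ k ∈ range (d + 1), d ^ (d - k) * d.choose k := by
    have := add_pow 1 d d
    simp only [one_pow, one_mul, Nat.cast_id] at this
    rw [add_comm 1 d] at this
    rw [this]

  have hterm : ∀ k, d ^ (d - k) * d.choose k ≤ d ^ d / Nat.factorial k := by
    intro k
    rw [Nat.le_div_iff_mul_le (Nat.factorial_pos k)]
    rcases le_or_gt k d with hkd | hkd
    · calc d ^ (d - k) * d.choose k * Nat.factorial k
          = d ^ (d - k) * (Nat.factorial k * d.choose k) := by ring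
        _ = d ^ (d - k) * d.descFactorial k := by rw [Nat.descFactorial_eq_factorial_mul_choose]
        _ ≤ d ^ (d - k) * d ^ k := by gcongr; exact Nat.descFactorial_le_pow d k
        _ = d ^ d := by rw [← pow_add]; congr 1; omega
    · simp [Nat.choose_eq_zero_of_lt hkd]
  rw [expand, Finset.sum_range_succ' (fun k => d ^ (d - k) * d.choose k)]
  have h0 : d ^ (d - 0) * d.choose 0 = d ^ d := by simp
  have hrest : (∑ k ∈ range d, d ^ (d - (k + 1)) * d.choose (k + 1)) ≤ 2 * d ^ d := by
    calc (∑ k ∈ range d, d ^ (d - (k + 1)) * d.choose (k + 1))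
        ≤ ∑ k ∈ range d, d ^ d / 2 ^ k := by
          refine Finset.sum_le_sum fun k _ => le_trans (hterm (k + 1)) ?_
          exact Nat.div_le_div_left (two_pow_le_factorial_succ k) (Nat.pow_pos (n := k) (by norm_num))
      _ ≤ 2 * d ^ d := geom_div'' (d ^ d) d
  omega

lemma pow_self_le (m : ℕ) : m ^ m ≤ 3 ^ m * Nat.factorial m := by
  induction m with
  | zero => simp
  | succ m ih =>
      calc (m + 1) ^ (m + 1) = (m + 1) * (m + 1) ^ m := by ring
        _ ≤ (m + 1) * (3 * m ^ m) := by gcongr; exact succ_pow_le_three_mul m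
        _ ≤ (m + 1) * (3 * (3 ^ m * Nat.factorial m)) := by gcongr
        _ = 3 ^ (m + 1) * Nat.factorial (m+1) := by rw [Nat.factorial_succ, pow_succ]; ring

/-- core numeric inequality -/
lemma core_ineq (D : ℕ) (hD : 4 ≤ D) : ∀ n : ℕ, 32 * D < n →
    D ^ 2 * n ^ D * 6 ^ D < 2 ^ n * D ^ D := by
  have hmain : ∀ n : ℕ, 32 * D + 1 ≤ n → D ^ 2 * n ^ D * 6 ^ D < 2 ^ n * D ^ D := by
    intro n hn
    induction n, hn using Nat.le_induction with
    | base =>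
        have h1 : (32 * D + 1) ^ D ≤ 2 * (32 * D) ^ D :=
          succ_pow_le_two_mul D (32 * D) (by omega)
        have hD2 : D ^ 2 ≤ 4 ^ D := by
          calc D ^ 2 ≤ (2 ^ D) ^ 2 := by gcongr; exact (Nat.lt_two_pow_self (n := D)).le
            _ = 4 ^ D := by rw [← pow_mul, mul_comm, pow_mul]; norm_num
        have h768 : (768 : ℕ) ^ D < 4294967296 ^ D :=
          Nat.pow_lt_pow_left (by norm_num) (by omega)
        have hkey : D ^ 2 * (192 ^ D * D ^ D) < 2 ^ (32 * D) * D ^ D := by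
          calc D ^ 2 * (192 ^ D * D ^ D) ≤ 4 ^ D * (192 ^ D * D ^ D) := by gcongr
            _ = (4 * 192) ^ D * D ^ D := by rw [mul_pow, mul_assoc]
            _ = 768 ^ D * D ^ D := by norm_num
            _ < 4294967296 ^ D * D ^ D := by
                have hDD : 0 < D ^ D := Nat.pow_pos (n := D) (by omega)
                exact Nat.mul_lt_mul_of_lt_of_le h768 le_rfl hDD
            _ = 2 ^ (32 * D) * D ^ D := by
                rw [show (4294967296:ℕ) = 2 ^ 32 by norm_num, ← pow_mul]
        calc D ^ 2 * (32 * D + 1) ^ D * 6 ^ D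
            ≤ D ^ 2 * (2 * (32 * D) ^ D) * 6 ^ D := by gcongr
          _ = 2 * (D ^ 2 * ((32 * 6 : ℕ) ^ D * D ^ D)) := by
              rw [mul_pow, mul_pow]; ring
          _ = 2 * (D ^ 2 * (192 ^ D * D ^ D)) := by norm_num
          _ < 2 * (2 ^ (32 * D) * D ^ D) := by omega
          _ = 2 ^ (32 * D + 1) * D ^ D := by rw [pow_succ]; ring
    | succ n hn ih =>
        have h1 : (n + 1) ^ D ≤ 2 * n ^ D := succ_pow_le_two_mul D n (by omega)
        calc D ^ 2 * (n + 1) ^ D * 6 ^ D ≤ D ^ 2 * (2 * n ^ D) * 6 ^ D := by gcongr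
          _ = 2 * (D ^ 2 * n ^ D * 6 ^ D) := by ring
          _ < 2 * (2 ^ n * D ^ D) := by omega
          _ = 2 ^ (n + 1) * D ^ D := by rw [pow_succ]; ring
  intro n hn; exact hmain n (by omega)

lemma factorial_le_mul_pow (k j : ℕ) : Nat.factorial (k + j) ≤ Nat.factorial k * (k + j) ^ j := by
  induction j with
  | zero => simp
  | succ j ih =>
      calc Nat.factorial (k + (j+1)) = (k + j + 1) * Nat.factorial (k + j) := by
            rw [show k + (j+1) = (k+j) + 1 by ring, Nat.factorial_succ]
        _ ≤ (k + j + 1) * (Nat.factorial k * (k + j) ^ j) := by gcongr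
        _ ≤ (k + j + 1) * (Nat.factorial k * (k + j + 1) ^ j) :=
            Nat.mul_le_mul_left _ (Nat.mul_le_mul_left _ (Nat.pow_le_pow_left (by omega) j))
        _ = Nat.factorial k * (k + (j+1)) ^ (j+1) := by
            rw [show k + (j+1) = k + j + 1 by ring, pow_succ]; ring

lemma phi_mul_factorial_le (d n : ℕ) (h : d ≤ n) :
    (∑ k ∈ Iic d, n.choose k) * Nat.factorial d ≤ (d + 1) * n ^ d := by
  rw [Finset.sum_mul]
  have hterm : ∀ k ∈ Iic d, n.choose k * Nat.factorial d ≤ n ^ d := by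
    intro k hk
    rw [Finset.mem_Iic] at hk
    obtain ⟨j, rfl⟩ : ∃ j, d = k + j := ⟨d - k, by omega⟩
    calc n.choose k * Nat.factorial (k + j)
        ≤ n.choose k * (Nat.factorial k * (k + j) ^ j) := by gcongr; exact factorial_le_mul_pow k j
      _ = (Nat.factorial k * n.choose k) * (k + j) ^ j := by ring
      _ = n.descFactorial k * (k + j) ^ j := by rw [Nat.descFactorial_eq_factorial_mul_choose]
      _ ≤ n ^ k * n ^ j :=
          Nat.mul_le_mul (Nat.descFactorial_le_pow n k) (Nat.pow_le_pow_left (by omega) j)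
      _ = n ^ (k + j) := by rw [pow_add]
  calc (∑ k ∈ Iic d, n.choose k * Nat.factorial d) ≤ ∑ _k ∈ Iic d, n ^ d :=
        Finset.sum_le_sum hterm
    _ = (d + 1) * n ^ d := by rw [Finset.sum_const, Nat.card_Iic, smul_eq_mul]

lemma central_factorial (a b : ℕ) :
    Nat.factorial (a + b) ≤ 2 ^ (a + b) * (Nat.factorial a * Nat.factorial b) := by
  have h1 : (a + b).choose b * Nat.factorial a * Nat.factorial b = Nat.factorial (a + b) :=
    Nat.add_choose_mul_factorial_mul_factorial a b
  have h2 : (a + b).choose b ≤ 2 ^ (a + b) := by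
    rw [← Nat.sum_range_choose (a + b)]
    exact Finset.single_le_sum (fun i _ => Nat.zero_le _) (Finset.mem_range.2 (by omega))
  calc Nat.factorial (a + b) = (a + b).choose b * Nat.factorial a * Nat.factorial b := h1.symm
    _ ≤ 2 ^ (a + b) * Nat.factorial a * Nat.factorial b := by gcongr
    _ = 2 ^ (a + b) * (Nat.factorial a * Nat.factorial b) := by ring

lemma key_ineq (δ δ' n : ℕ) (hδ : 2 ≤ δ) (hδ' : 2 ≤ δ') (hn : 32 * (δ + δ') < n) :
    (∑ k ∈ Iic δ, n.choose k) * (∑ k ∈ Iic δ', n.choose k) < 2 ^ n := by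
  set D := δ + δ' with hDdef
  have hD4 : 4 ≤ D := by omega
  set S := (∑ k ∈ Iic δ, n.choose k) * (∑ k ∈ Iic δ', n.choose k) with hS
  set F := Nat.factorial δ * Nat.factorial δ' with hF
  have hSF : S * F ≤ D ^ 2 * n ^ D := by
    calc S * F = ((∑ k ∈ Iic δ, n.choose k) * Nat.factorial δ) *
          ((∑ k ∈ Iic δ', n.choose k) * Nat.factorial δ') := by rw [hS, hF]; ring
      _ ≤ ((δ + 1) * n ^ δ) * ((δ' + 1) * n ^ δ') :=
          Nat.mul_le_mul (phi_mul_factorial_le δ n (by omega))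
            (phi_mul_factorial_le δ' n (by omega))
      _ = ((δ + 1) * (δ' + 1)) * (n ^ δ * n ^ δ') := by ring
      _ = ((δ + 1) * (δ' + 1)) * n ^ D := by rw [hDdef, pow_add]
      _ ≤ D ^ 2 * n ^ D := by
          have hle : (δ + 1) * (δ' + 1) ≤ D ^ 2 := by
            rw [pow_two]; exact Nat.mul_le_mul (by omega) (by omega)
          gcongr
  have hDD : D ^ D ≤ 6 ^ D * F := by
    calc D ^ D ≤ 3 ^ D * Nat.factorial D := pow_self_le D
      _ ≤ 3 ^ D * (2 ^ D * F) := by gcongr; exact central_factorial δ δ'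
      _ = 6 ^ D * F := by rw [show (6:ℕ) = 3 * 2 by norm_num, mul_pow]; ring
  have hchain : S * (6 ^ D * F) < 2 ^ n * (6 ^ D * F) := by
    calc S * (6 ^ D * F) = (S * F) * 6 ^ D := by ring
      _ ≤ (D ^ 2 * n ^ D) * 6 ^ D := by gcongr
      _ < 2 ^ n * D ^ D := core_ineq D hD4 n hn
      _ ≤ 2 ^ n * (6 ^ D * F) := by gcongr
  exact Nat.lt_of_mul_lt_mul_right hchain

/-- Trace family of `R` on `A`, with Sauer–Shelah bound. -/
lemma trace_family {X : Type} (R : Set (Set X)) (δ : ℕ) (hR : VCDimLE R δ) (A : Finset X) :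
    ∃ 𝒜 : Finset (Finset {x // x ∈ A}),
      (∀ r ∈ R, ∃ u ∈ 𝒜, ∀ a : {x // x ∈ A}, a ∈ u ↔ (a : X) ∈ r) ∧
      𝒜.card ≤ ∑ k ∈ Iic δ, (A.card).choose k := by
  classical
  set α := {x // x ∈ A}
  set 𝒜 : Finset (Finset α) :=
    univ.filter (fun u : Finset α => ∃ r ∈ R, ∀ a : α, a ∈ u ↔ (a : X) ∈ r) with h𝒜
  refine ⟨𝒜, ?_, ?_⟩
  · intro r hr
    refine ⟨univ.filter (fun a : α => (a : X) ∈ r), ?_, ?_⟩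
    · rw [h𝒜, mem_filter]
      exact ⟨mem_univ _, r, hr, fun a => by rw [Finset.mem_filter]; exact ⟨fun h => h.2, fun h => ⟨Finset.mem_univ _, h⟩⟩⟩
    · intro a
      rw [Finset.mem_filter]
      exact ⟨fun h => h.2, fun h => ⟨Finset.mem_univ _, h⟩⟩
  · -- VC dimension of the trace family is at most δ
    have hvc : 𝒜.vcDim ≤ δ := by
      apply Finset.sup_le
      intro s hs
      rw [Finset.mem_shatterer] at hs
      set s' : Finset X := s.map (Function.Embedding.subtype _) with hs'
      have hshat : ShattersSys R s' := by
        intro B hB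
        set t : Finset α := s.filter (fun a => (a : X) ∈ B) with ht
        have htsub : t ⊆ s := Finset.filter_subset _ _
        obtain ⟨u, hu, hsu⟩ := hs htsub
        rw [h𝒜, mem_filter] at hu
        obtain ⟨-, r, hr, hru⟩ := hu
        refine ⟨r, hr, ?_⟩
        ext x
        simp only [Set.mem_inter_iff, Finset.mem_coe]
        constructor
        · intro hx
          have hxs' : x ∈ s' := hB hx
          rw [hs', Finset.mem_map] at hxs'
          obtain ⟨a, ha, rfl⟩ := hxs'
          have hat : a ∈ s ∩ u := by
            rw [hsu]; exact Finset.mem_filter.2 ⟨ha, hx⟩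
          exact ⟨(hru a).1 (Finset.mem_inter.1 hat).2, hB hx⟩
        · rintro ⟨hxr, hxs'⟩
          rw [hs', Finset.mem_map] at hxs'
          obtain ⟨a, ha, rfl⟩ := hxs'
          have hau : a ∈ u := (hru a).2 hxr
          have : a ∈ s ∩ u := Finset.mem_inter.2 ⟨ha, hau⟩
          rw [hsu, Finset.mem_filter] at this
          exact this.2
      have := hR s' hshat
      rwa [hs', Finset.card_map] at this
    calc 𝒜.card ≤ 𝒜.shatterer.card := Finset.card_le_card_shatterer 𝒜
      _ ≤ ∑ k ∈ Iic 𝒜.vcDim, (Fintype.card α).choose k := Finset.card_shatterer_le_sum_vcDim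
      _ ≤ ∑ k ∈ Iic δ, (Fintype.card α).choose k :=
          Finset.sum_le_sum_of_subset (Finset.Iic_subset_Iic.2 hvc)
      _ = ∑ k ∈ Iic δ, (A.card).choose k := by rw [Fintype.card_coe]

/-- There is an absolute constant `c` such that for any two set systems on
a common ground set of VC dimensions `δ, δ' > 1`, the system of pairwise intersections
of their ranges has VC dimension at most `c * (δ + δ')`. -/
theorem vcDim_intersection_system :
    ∃ c : ℕ, 0 < c ∧
      ∀ (X : Type) (R R' : Set (Set X)) (δ δ' : ℕ),
        1 < δ → 1 < δ' → VCDimLE R δ → VCDimLE R' δ' →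
        VCDimLE {s : Set X | ∃ r ∈ R, ∃ r' ∈ R', s = r ∩ r'} (c * (δ + δ')) := by
  refine ⟨32, by norm_num, ?_⟩
  intro X R R' δ δ' hδ hδ' hR hR' A hA
  classical
  by_contra hcon
  push_neg at hcon
  set n := A.card with hn
  obtain ⟨𝒜, h𝒜mem, h𝒜card⟩ := trace_family R δ hR A
  obtain ⟨𝒜', h𝒜'mem, h𝒜'card⟩ := trace_family R' δ' hR' A
  -- injection from subsets of A into 𝒜 ×ˢ 𝒜'
  have hex : ∀ B : Finset {x // x ∈ A}, ∃ p : Finset {x // x ∈ A} × Finset {x // x ∈ A},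
      p.1 ∈ 𝒜 ∧ p.2 ∈ 𝒜' ∧ p.1 ∩ p.2 = B := by
    intro B
    have hBsub : B.map (Function.Embedding.subtype _) ⊆ A := by
      intro x hx
      rw [Finset.mem_map] at hx
      obtain ⟨a, _, rfl⟩ := hx
      exact a.2
    obtain ⟨s, hs, hseq⟩ := hA _ hBsub
    obtain ⟨r, hr, r', hr', rfl⟩ := hs
    obtain ⟨u, hu, hur⟩ := h𝒜mem r hr
    obtain ⟨u', hu', hur'⟩ := h𝒜'mem r' hr'
    refine ⟨(u, u'), hu, hu', ?_⟩
    ext a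
    have haA : (a : X) ∈ (A : Set X) := a.2
    have : (a : X) ∈ (↑(B.map (Function.Embedding.subtype _)) : Set X) ↔ a ∈ B := by
      simp only [Finset.mem_coe, Finset.mem_map, Function.Embedding.coe_subtype]
      constructor
      · rintro ⟨b, hb, hba⟩; rwa [Subtype.ext hba] at hb
      · intro hb; exact ⟨a, hb, rfl⟩
    rw [Finset.mem_inter, hur a, hur' a, ← this, hseq]
    simp only [Set.mem_inter_iff, Set.mem_setOf_eq]
    tauto
  choose f hf1 hf2 hf3 using hex
  have hinj : Set.InjOn f ↑(univ : Finset (Finset {x // x ∈ A})) := by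
    intro B1 _ B2 _ hB
    rw [← hf3 B1, ← hf3 B2, hB]
  have hcard : 2 ^ n ≤ 𝒜.card * 𝒜'.card := by
    have hmaps : ∀ B ∈ (univ : Finset (Finset {x // x ∈ A})), f B ∈ 𝒜 ×ˢ 𝒜' := by
      intro B _
      rw [Finset.mem_product]
      exact ⟨hf1 B, hf2 B⟩
    have := Finset.card_le_card_of_injOn f hmaps hinj
    rwa [Finset.card_univ, Fintype.card_finset, Fintype.card_coe, Finset.card_product, ← hn]
      at this
  have hlt : (∑ k ∈ Iic δ, n.choose k) * (∑ k ∈ Iic δ', n.choose k) < 2 ^ n :=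
    key_ineq δ δ' n (by omega) (by omega) (by omega)
  have hge : 2 ^ n ≤ (∑ k ∈ Iic δ, n.choose k) * (∑ k ∈ Iic δ', n.choose k) :=
    le_trans hcard (Nat.mul_le_mul h𝒜card h𝒜'card)
  omega
end

section
/- Let Y = ∑_{i=1}^k X_i be a sum of independent Bernoulli random variables X_i with P(X_i = 1) = p_i, and suppose μ = E[Y] ≥ c·d for constants c ≥ 4 and positive integer d. Then for every integer j with 0 ≤ j ≤ d, P(Y ≤ d − j) ≤ exp(−(c/4)·d − (3/4)·j). -/
set_option maxHeartbeats 1000000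


open MeasureTheory ProbabilityTheory

/-- Chernoff lower-tail bound for a sum `Y` of independent Bernoulli
random variables with mean `μ = E[Y] ≥ c·d`, `c ≥ 4`: for `0 ≤ j ≤ d`,
`P(Y ≤ d − j) ≤ exp(−(c/4)d − (3/4)j)`. -/
theorem chernoff_lower_tail_bernoulli
    {Ω : Type*} [MeasurableSpace Ω] (μ : Measure Ω) [IsProbabilityMeasure μ]
    (k : ℕ) (X : Fin k → Ω → ℝ) (p : Fin k → ℝ)
    (hmeas : ∀ i, Measurable (X i))
    (hind : iIndepFun X μ)
    (hval : ∀ i, ∀ ω, X i ω = 0 ∨ X i ω = 1)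
    (hp : ∀ i, μ {ω | X i ω = 1} = ENNReal.ofReal (p i))
    (c : ℝ) (d : ℕ) (hc : 4 ≤ c) (hd : 1 ≤ d)
    (hmean : c * d ≤ ∫ ω, (∑ i, X i ω) ∂μ) :
    ∀ j : ℕ, j ≤ d →
      (μ {ω | ∑ i, X i ω ≤ (d : ℝ) - j}).toReal ≤
        Real.exp (-(c / 4) * d - (3 / 4) * j) := by
  intro j hj
  set E : ℝ := Real.exp (-1) with hE
  -- integrability of each X i
  have hXint : ∀ i, Integrable (X i) μ := by
    intro i
    refine (integrable_const (1 : ℝ)).mono' (hmeas i).aestronglyMeasurable ?_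
    filter_upwards with ω
    rcases hval i ω with h | h <;> simp [h]
  -- pointwise identity for exp(-X i)
  have hptw : ∀ i ω, Real.exp (-1 * X i ω) = 1 + (E - 1) * X i ω := by
    intro i ω
    rcases hval i ω with h | h <;> simp [h, hE] <;> ring
  -- integrability of exp(-1 * X i)
  have hXexpint : ∀ i, Integrable (fun ω => Real.exp (-1 * X i ω)) μ := by
    intro i
    have : (fun ω => Real.exp (-1 * X i ω)) = fun ω => 1 + (E - 1) * X i ω := by
      funext ω; exact hptw i ω
    rw [this]
    exact (integrable_const (1 : ℝ)).add ((hXint i).const_mul _)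
  -- mgf of each X i at -1
  have hmgf_i : ∀ i, mgf (X i) μ (-1) = 1 + (E - 1) * ∫ ω, X i ω ∂μ := by
    intro i
    unfold mgf
    simp_rw [hptw i]
    rw [integral_add (integrable_const 1) ((hXint i).const_mul _),
      integral_const, integral_const_mul]
    simp
  -- bound each mgf by an exponential
  have hmgf_le : ∀ i, mgf (X i) μ (-1) ≤ Real.exp ((E - 1) * ∫ ω, X i ω ∂μ) := by
    intro i
    rw [hmgf_i i]
    have := Real.add_one_le_exp ((E - 1) * ∫ ω, X i ω ∂μ)
    linarith
  -- mgf of sum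
  have hsum_eq : (fun ω => ∑ i, X i ω) = ∑ i, X i := by
    funext ω; simp
  have hmgf_sum : mgf (fun ω => ∑ i, X i ω) μ (-1) = ∏ i, mgf (X i) μ (-1) := by
    rw [hsum_eq]; exact hind.mgf_sum hmeas Finset.univ
  have hprod_le : ∏ i, mgf (X i) μ (-1) ≤
      Real.exp ((E - 1) * ∫ ω, (∑ i, X i ω) ∂μ) := by
    calc ∏ i, mgf (X i) μ (-1) ≤ ∏ i, Real.exp ((E - 1) * ∫ ω, X i ω ∂μ) := by
          apply Finset.prod_le_prod
          · intro i _; exact mgf_nonneg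
          · intro i _; exact hmgf_le i
      _ = Real.exp (∑ i, (E - 1) * ∫ ω, X i ω ∂μ) := (Real.exp_sum _ _).symm
      _ = Real.exp ((E - 1) * ∫ ω, (∑ i, X i ω) ∂μ) := by
          rw [← Finset.mul_sum, ← integral_finset_sum _ (fun i _ => hXint i)]
  -- integrability of exp(-1 * sum)
  have hYexpint : Integrable (fun ω => Real.exp (-1 * ∑ i, X i ω)) μ := by
    refine (integrable_const (1 : ℝ)).mono' ?_ ?_
    · exact (Measurable.exp ((Finset.measurable_sum _ fun i _ => hmeas i).const_mul (-1))).aestronglyMeasurable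
    · filter_upwards with ω
      have h0 : 0 ≤ ∑ i, X i ω := Finset.sum_nonneg fun i _ => by
        rcases hval i ω with h | h <;> simp [h]
      have : Real.exp (-1 * ∑ i, X i ω) ≤ 1 :=
        calc Real.exp (-1 * ∑ i, X i ω) ≤ Real.exp 0 :=
              Real.exp_le_exp.mpr (by nlinarith)
          _ = 1 := Real.exp_zero
      simpa [abs_of_pos (Real.exp_pos _)] using this
  -- Chernoff
  have hcher := measure_le_le_exp_mul_mgf (μ := μ) (X := fun ω => ∑ i, X i ω)
    ((d : ℝ) - j) (by norm_num : (-1 : ℝ) ≤ 0) hYexpint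
  have hEhalf : E ≤ 1 / 2 := by
    rw [hE, Real.exp_neg]
    have h2 : (2 : ℝ) ≤ Real.exp 1 := by
      have := Real.add_one_le_exp (1 : ℝ); linarith
    rw [inv_le_comm₀ (by positivity) (by norm_num)]
    linarith
  have hd1 : (1 : ℝ) ≤ (d : ℝ) := by exact_mod_cast hd
  have hj0 : (0 : ℝ) ≤ (j : ℝ) := Nat.cast_nonneg j
  have hIY : c * d ≤ ∫ ω, (∑ i, X i ω) ∂μ := hmean
  rw [neg_neg, one_mul, hmgf_sum] at hcher
  calc (μ {ω | ∑ i, X i ω ≤ (d : ℝ) - j}).toReal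
      ≤ Real.exp ((d : ℝ) - j) * ∏ i, mgf (X i) μ (-1) := hcher
    _ ≤ Real.exp ((d : ℝ) - j) * Real.exp ((E - 1) * ∫ ω, (∑ i, X i ω) ∂μ) :=
        mul_le_mul_of_nonneg_left hprod_le (Real.exp_pos _).le
    _ = Real.exp (((d : ℝ) - j) + (E - 1) * ∫ ω, (∑ i, X i ω) ∂μ) :=
        (Real.exp_add _ _).symm
    _ ≤ Real.exp (-(c / 4) * d - (3 / 4) * j) := by
        apply Real.exp_le_exp.mpr
        have hneg : E - 1 ≤ 0 := by linarith
        have h1 : (E - 1) * ∫ ω, (∑ i, X i ω) ∂μ ≤ (E - 1) * (c * d) :=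
          mul_le_mul_of_nonpos_left hIY hneg
        have hcd : (0 : ℝ) ≤ c * d := by nlinarith
        have h2 : (E - 1) * (c * d) ≤ -(1 / 2) * (c * d) := by nlinarith
        have h3 : 4 * (d : ℝ) ≤ c * d := by nlinarith
        linarith
end

section
/- Let Y be a sum of independent Bernoulli random variables with E[Y] ≥ c·d, where c ≥ 4 and d ≥ 1 is an integer. Define the residual Z = max(d − Y, 0). Then E[Z] ≤ exp(−(c/4)·d). -/
open MeasureTheory ProbabilityTheory

/-- If `Y` is a sum of independent Bernoulli random variables with
`E[Y] ≥ c·d`, `c ≥ 4`, `d ≥ 1`, then the residual `Z = max(d − Y, 0)` satisfies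
`E[Z] ≤ exp(−(c/4)·d)`. -/
theorem expected_residual_le
    {Ω : Type*} [MeasurableSpace Ω] (μ : Measure Ω) [IsProbabilityMeasure μ]
    (k : ℕ) (X : Fin k → Ω → ℝ) (p : Fin k → ℝ)
    (hmeas : ∀ i, Measurable (X i))
    (hind : iIndepFun X μ)
    (hval : ∀ i, ∀ ω, X i ω = 0 ∨ X i ω = 1)
    (hp : ∀ i, μ {ω | X i ω = 1} = ENNReal.ofReal (p i))
    (c : ℝ) (d : ℕ) (hc : 4 ≤ c) (hd : 1 ≤ d)
    (hmean : c * d ≤ ∫ ω, (∑ i, X i ω) ∂μ) :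
    ∫ ω, max ((d : ℝ) - ∑ i, X i ω) 0 ∂μ ≤ Real.exp (-(c / 4) * d) := by
  classical
  set t : ℝ := -(3/4) with ht_def
  set Y : Ω → ℝ := fun ω => ∑ i, X i ω with hY_def
  have hYsum : Y = ∑ i, X i := by funext ω; simp [hY_def]
  have hYmeas : Measurable Y := by
    apply Finset.measurable_sum
    exact fun i _ => hmeas i
  have hX01 : ∀ i ω, 0 ≤ X i ω ∧ X i ω ≤ 1 := by
    intro i ω; rcases hval i ω with h | h <;> rw [h] <;> norm_num
  have hXint : ∀ i, Integrable (X i) μ := by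
    intro i
    refine (integrable_const (1:ℝ)).mono' (hmeas i).aestronglyMeasurable ?_
    filter_upwards with ω
    rw [Real.norm_eq_abs, abs_le]
    constructor
    · linarith [(hX01 i ω).1]
    · exact (hX01 i ω).2
  have hYnonneg : ∀ ω, 0 ≤ Y ω :=
    fun ω => Finset.sum_nonneg fun i _ => (hX01 i ω).1
  have hYle : ∀ ω, Y ω ≤ k := by
    intro ω
    calc Y ω ≤ ∑ _i : Fin k, (1:ℝ) := Finset.sum_le_sum fun i _ => (hX01 i ω).2
    _ = k := by simp
  have hYint : Integrable Y μ := by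
    rw [hY_def]; exact integrable_finset_sum _ fun i _ => hXint i
  -- numeric facts
  have hexp2 : (2:ℝ) ≤ Real.exp (3/4) := by
    have h8 : Real.exp (3/4) = Real.exp (3/32) ^ 8 := by
      rw [← Real.exp_nat_mul]; norm_num
    have h1 : (1 + 3/32 : ℝ) ≤ Real.exp (3/32) := by
      linarith [Real.add_one_le_exp (3/32 : ℝ)]
    have h1' : (1 + 3/32 : ℝ) ^ 8 ≤ Real.exp (3/32) ^ 8 := by
      apply pow_le_pow_left₀ (by norm_num) h1
    rw [h8]
    calc (2:ℝ) ≤ (1 + 3/32)^8 := by norm_num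
    _ ≤ _ := h1'
  have hrpos : 0 < Real.exp t := Real.exp_pos t
  have hr : Real.exp t ≤ 1/2 := by
    rw [ht_def, Real.exp_neg]
    rw [inv_le_comm₀ (Real.exp_pos _) (by norm_num)]
    simpa using hexp2
  -- mgf of each Bernoulli
  have hEXnonneg : ∀ i, 0 ≤ ∫ ω, X i ω ∂μ :=
    fun i => integral_nonneg fun ω => (hX01 i ω).1
  have hmgfX : ∀ i, mgf (X i) μ t = 1 + (Real.exp t - 1) * ∫ ω, X i ω ∂μ := by
    intro i
    have hpt : ∀ ω, Real.exp (t * X i ω) = 1 + (Real.exp t - 1) * X i ω := by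
      intro ω; rcases hval i ω with h | h <;> rw [h] <;> simp
    unfold mgf
    rw [show (fun ω => Real.exp (t * X i ω)) = fun ω => 1 + (Real.exp t - 1) * X i ω from
      funext hpt]
    rw [integral_add (integrable_const 1) ((hXint i).const_mul _), integral_const,
      integral_const_mul]
    simp
  have hmgfY : mgf Y μ t ≤ Real.exp ((Real.exp t - 1) * (c * d)) := by
    have h1 : mgf Y μ t = ∏ i, mgf (X i) μ t := by
      rw [hYsum]; exact hind.mgf_sum hmeas Finset.univ
    have h2 : ∏ i, mgf (X i) μ t ≤ ∏ i, Real.exp ((Real.exp t - 1) * ∫ ω, X i ω ∂μ) := by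
      apply Finset.prod_le_prod (fun i _ => mgf_nonneg)
      intro i _
      rw [hmgfX i]
      have := Real.add_one_le_exp ((Real.exp t - 1) * ∫ ω, X i ω ∂μ)
      linarith
    have h3 : ∏ i, Real.exp ((Real.exp t - 1) * ∫ ω, X i ω ∂μ)
        = Real.exp ((Real.exp t - 1) * ∫ ω, Y ω ∂μ) := by
      rw [← Real.exp_sum, ← Finset.mul_sum]
      congr 2
      rw [hY_def, integral_finset_sum _ fun i _ => hXint i]
    have h4 : (Real.exp t - 1) * ∫ ω, Y ω ∂μ ≤ (Real.exp t - 1) * (c * d) := by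
      apply mul_le_mul_of_nonpos_left _ (by linarith)
      exact hmean
    rw [h1]
    exact h2.trans (h3.le.trans (Real.exp_le_exp.mpr h4))
  -- integrability of exp(t Y)
  have hexpYint : Integrable (fun ω => Real.exp (t * Y ω)) μ := by
    refine (integrable_const (1:ℝ)).mono'
      ((hYmeas.const_mul t).exp.aestronglyMeasurable) ?_
    filter_upwards with ω
    rw [Real.norm_eq_abs, abs_of_pos (Real.exp_pos _), ← Real.exp_zero]
    apply Real.exp_le_exp.mpr
    apply mul_nonpos_of_nonpos_of_nonneg _ (hYnonneg ω)
    rw [ht_def]; norm_num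
  -- Chernoff per level
  have hChern : ∀ j : ℕ, (μ {ω | Y ω ≤ (d:ℝ) - j}).toReal
      ≤ Real.exp (-t * ((d:ℝ) - j)) * mgf Y μ t := by
    intro j
    exact measure_le_le_exp_mul_mgf ((d:ℝ) - j) (by norm_num [ht_def]) hexpYint
  have hSmeas : ∀ j : ℕ, MeasurableSet {ω | Y ω ≤ (d:ℝ) - j} :=
    fun j => measurableSet_le hYmeas measurable_const
  -- pointwise bound
  have hpt : ∀ ω, max ((d:ℝ) - Y ω) 0
      ≤ ∑ j ∈ Finset.Icc 1 d, Set.indicator {ω' | Y ω' ≤ (d:ℝ) - j} (fun _ => (1:ℝ)) ω := by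
    intro ω
    have hnat : ∃ n : ℕ, Y ω = n := by
      rw [hY_def]
      simp only
      induction (Finset.univ : Finset (Fin k)) using Finset.induction_on with
      | empty => exact ⟨0, by simp⟩
      | @insert a s hnotmem ih =>
        obtain ⟨n, hn⟩ := ih
        rcases hval a ω with h | h
        · exact ⟨n, by rw [Finset.sum_insert hnotmem, h, hn]; simp⟩
        · exact ⟨n + 1, by rw [Finset.sum_insert hnotmem, h, hn]; push_cast; ring⟩
    obtain ⟨n, hn⟩ := hnat
    have hind_nonneg : ∀ j ∈ Finset.Icc 1 d,
        0 ≤ Set.indicator {ω' | Y ω' ≤ (d:ℝ) - j} (fun _ => (1:ℝ)) ω :=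
      fun j _ => Set.indicator_nonneg (fun _ _ => zero_le_one) ω
    by_cases hcase : d ≤ n
    · have : max ((d:ℝ) - Y ω) 0 = 0 := by
        apply max_eq_right
        rw [hn]
        have : (d:ℝ) ≤ n := by exact_mod_cast hcase
        linarith
      rw [this]
      exact Finset.sum_nonneg hind_nonneg
    · push_neg at hcase
      have hnd : n ≤ d := hcase.le
      have h1 : max ((d:ℝ) - Y ω) 0 = (d:ℝ) - (n:ℝ) := by
        rw [hn]
        apply max_eq_left
        have : (n:ℝ) ≤ d := by exact_mod_cast hnd
        linarith
      rw [h1]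
      have hsub : Finset.Icc 1 (d - n) ⊆ Finset.Icc 1 d :=
        Finset.Icc_subset_Icc_right (Nat.sub_le d n)
      have hterm : ∀ j ∈ Finset.Icc 1 (d - n),
          Set.indicator {ω' | Y ω' ≤ (d:ℝ) - j} (fun _ => (1:ℝ)) ω = 1 := by
        intro j hj
        rw [Finset.mem_Icc] at hj
        have hjd : j + n ≤ d := by omega
        apply Set.indicator_of_mem
        rw [Set.mem_setOf_eq, hn]
        have : (j:ℝ) + n ≤ d := by exact_mod_cast hjd
        linarith
      calc (d:ℝ) - n = ∑ j ∈ Finset.Icc 1 (d - n),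
            Set.indicator {ω' | Y ω' ≤ (d:ℝ) - j} (fun _ => (1:ℝ)) ω := by
            rw [Finset.sum_congr rfl hterm, Finset.sum_const, Nat.card_Icc,
              nsmul_eq_mul, mul_one, Nat.add_sub_cancel, Nat.cast_sub hnd]
      _ ≤ _ := Finset.sum_le_sum_of_subset_of_nonneg hsub
            (fun j hj _ => hind_nonneg j hj)
  -- integrate
  have hIndInt : ∀ j : ℕ, Integrable
      (Set.indicator {ω' | Y ω' ≤ (d:ℝ) - j} (fun _ => (1:ℝ))) μ :=
    fun j => (integrable_const (1:ℝ)).indicator (hSmeas j)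
  have hZint : Integrable (fun ω => max ((d:ℝ) - Y ω) 0) μ := by
    refine (integrable_const (d:ℝ)).mono'
      ((measurable_const.sub hYmeas).max measurable_const).aestronglyMeasurable ?_
    filter_upwards with ω
    rw [Real.norm_eq_abs, abs_of_nonneg (le_max_right _ _)]
    have h0 := hYnonneg ω
    have hd0 : (0:ℝ) ≤ d := Nat.cast_nonneg d
    rw [max_le_iff]
    constructor <;> linarith
  have step1 : ∫ ω, max ((d:ℝ) - Y ω) 0 ∂μ
      ≤ ∑ j ∈ Finset.Icc 1 d, (μ {ω | Y ω ≤ (d:ℝ) - j}).toReal := by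
    have : ∫ ω, max ((d:ℝ) - Y ω) 0 ∂μ ≤ ∫ ω, ∑ j ∈ Finset.Icc 1 d,
        Set.indicator {ω' | Y ω' ≤ (d:ℝ) - j} (fun _ => (1:ℝ)) ω ∂μ := by
      apply integral_mono hZint (integrable_finset_sum _ fun j _ => hIndInt j) hpt
    refine this.trans_eq ?_
    rw [integral_finset_sum _ fun j _ => hIndInt j]
    apply Finset.sum_congr rfl
    intro j _
    rw [integral_indicator_const (1:ℝ) (hSmeas j)]
    simp
    rfl
  -- final numeric chain
  have step2 : ∀ j ∈ Finset.Icc 1 d,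
      Real.exp (-t * ((d:ℝ) - j)) * mgf Y μ t
      ≤ Real.exp (-(c/4) * d) * Real.exp t ^ j := by
    intro j _
    have h1 : Real.exp (-t * ((d:ℝ) - j)) * mgf Y μ t
        ≤ Real.exp (-t * ((d:ℝ) - j)) * Real.exp ((Real.exp t - 1) * (c * d)) := by
      apply mul_le_mul_of_nonneg_left hmgfY (Real.exp_pos _).le
    refine h1.trans ?_
    rw [← Real.exp_add]
    have hj : Real.exp (t * j) = Real.exp t ^ j := by
      rw [mul_comm, Real.exp_nat_mul]
    rw [show Real.exp (-(c/4) * d) * Real.exp t ^ j = Real.exp (-(c/4) * d + t * j) by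
      rw [Real.exp_add, hj]]
    apply Real.exp_le_exp.mpr
    have hd1 : (1:ℝ) ≤ d := by exact_mod_cast hd
    rw [ht_def]
    have hr' : Real.exp (-(3/4):ℝ) ≤ 1/2 := by rw [← ht_def]; exact hr
    have hcd : 4 * (d:ℝ) ≤ c * d :=
      mul_le_mul_of_nonneg_right hc (by linarith)
    have hkey : (Real.exp (-(3/4):ℝ) - 1) * (c * d) ≤ -(1/2) * (c * d) :=
      mul_le_mul_of_nonneg_right (by linarith) (by nlinarith)
    linarith
  have step3 : ∑ j ∈ Finset.Icc 1 d, Real.exp (-(c/4) * d) * Real.exp t ^ j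
      ≤ Real.exp (-(c/4) * d) := by
    rw [← Finset.mul_sum]
    have hsum : ∑ j ∈ Finset.Icc 1 d, Real.exp t ^ j ≤ 1 := by
      have h1 : ∑ j ∈ Finset.Icc 1 d, Real.exp t ^ j
          ≤ ∑ j ∈ Finset.Icc 1 d, (1/2:ℝ) ^ j :=
        Finset.sum_le_sum fun j _ => pow_le_pow_left₀ hrpos.le hr j
      refine h1.trans ?_
      rw [show Finset.Icc 1 d = Finset.Ico 1 (d+1) by rw [Finset.Ico_add_one_right_eq_Icc],
        Finset.sum_Ico_eq_sum_range]
      have : ∀ i ∈ Finset.range (d + 1 - 1), ((1:ℝ)/2) ^ (1 + i) = (1/2) * (1/2)^i := by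
        intro i _; rw [pow_add, pow_one]
      rw [Finset.sum_congr rfl this, ← Finset.mul_sum]
      have := sum_geometric_two_le (d + 1 - 1)
      linarith
    calc Real.exp (-(c/4) * d) * ∑ j ∈ Finset.Icc 1 d, Real.exp t ^ j
        ≤ Real.exp (-(c/4) * d) * 1 := by
          apply mul_le_mul_of_nonneg_left hsum (Real.exp_pos _).le
    _ = _ := mul_one _
  calc ∫ ω, max ((d : ℝ) - ∑ i, X i ω) 0 ∂μ
      = ∫ ω, max ((d:ℝ) - Y ω) 0 ∂μ := rfl
  _ ≤ ∑ j ∈ Finset.Icc 1 d, (μ {ω | Y ω ≤ (d:ℝ) - j}).toReal := step1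
  _ ≤ ∑ j ∈ Finset.Icc 1 d, Real.exp (-t * ((d:ℝ) - j)) * mgf Y μ t :=
      Finset.sum_le_sum fun j _ => hChern j
  _ ≤ ∑ j ∈ Finset.Icc 1 d, Real.exp (-(c/4) * d) * Real.exp t ^ j :=
      Finset.sum_le_sum step2
  _ ≤ Real.exp (-(c/4) * d) := step3
end

section
/- Let F = {r_1,…,r_m} be sets over a finite ground set P with demands d : P → ℕ, and let x ∈ [0,1]^m be a feasible fractional multi-cover (i.e., ∑_{i : p ∈ r_i} x_i ≥ d(p) for all p). In the derived set system (P', F̂), where P' consists of pairs (p, I) for the greedy interval decomposition of each point's constraint and F̂ = {r̂_i} with r̂_i = {(p,I) ∈ P' : p ∈ r_i and i ∈ I}, the vector 2x is a feasible fractional set cover of value at most 2·∑_i x_i: every element (p, I) of P' is fractionally covered to total weight at least 1 by {r̂_i}. -/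
/-- In the derived set system of the greedy interval decomposition, the
vector `2x` is a feasible fractional set cover of value `2·∑ x_i`: for any point `p` and
any greedy block `V` of indices of ranges containing `p` with `∑_{i ∈ V} x_i ≥ 1/2`, the
element `(p, I)` with `I = [min V, max V]` is fractionally covered to weight at least `1`
by the weights `2x_i` on the derived ranges `r̂_i` (i.e. over indices `i ∈ I` with
`p ∈ r_i`), and the total value of `2x` is `2·∑ x_i`. -/
theorem derived_system_fractional_cover {α : Type*} [DecidableEq α]
    (m : ℕ) (r : Fin m → Finset α) (x : Fin m → ℝ) (p : α)
    (hx : ∀ i, 0 ≤ x i ∧ x i ≤ 1)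
    (V : Finset (Fin m)) (hV : V.Nonempty)
    (hVr : ∀ i ∈ V, p ∈ r i)
    (hVsum : 1 / 2 ≤ ∑ i ∈ V, x i) :
    1 ≤ (∑ i ∈ Finset.univ.filter
          (fun i => p ∈ r i ∧ i ∈ Finset.Icc (V.min' hV) (V.max' hV)), 2 * x i) ∧
    (∑ i, 2 * x i) = 2 * ∑ i, x i := by
  constructor
  · have hsub : V ⊆ Finset.univ.filter
        (fun i => p ∈ r i ∧ i ∈ Finset.Icc (V.min' hV) (V.max' hV)) := by
      intro i hi
      simp only [Finset.mem_filter, Finset.mem_univ, Finset.mem_Icc, true_and]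
      exact ⟨hVr i hi, V.min'_le i hi, V.le_max' i hi⟩
    calc (1 : ℝ) = 2 * (1 / 2) := by norm_num
    _ ≤ 2 * ∑ i ∈ V, x i := by linarith
    _ = ∑ i ∈ V, 2 * x i := by rw [Finset.mul_sum]
    _ ≤ _ := Finset.sum_le_sum_of_subset_of_nonneg hsub
        (fun i _ _ => by linarith [(hx i).1])
  · rw [Finset.mul_sum]
end

section
/- With the derived set system (P', F̂) as above, any sub-collection Ĉ ⊆ F̂ that covers every element of P' (set cover) corresponds to a sub-collection C ⊆ F of the same cardinality that is a feasible multi-cover for the original instance: every point p is contained in at least d(p) distinct sets of C, provided the greedy decomposition of p produced at least d(p) blocks. -/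
/-- A set cover of the derived system yields a multi-cover of the same
cardinality for the original instance. -/
theorem derived_cover_to_multicover {α : Type*} [DecidableEq α]
    (m : ℕ) (r : Fin m → Finset α) (d : α → ℕ) (P : Finset α)
    (P' : Finset (α × Finset (Fin m))) (C : Finset (Fin m))
    (hdisj : ∀ p ∈ P, ∀ I J : Finset (Fin m),
      (p, I) ∈ P' → (p, J) ∈ P' → I ≠ J → Disjoint I J)
    (hblocks : ∀ p ∈ P, d p ≤ (P'.filter (fun q => q.1 = p)).card)
    (hcover : ∀ q ∈ P', ∃ i ∈ C, q.1 ∈ r i ∧ i ∈ q.2) :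
    ∀ p ∈ P, d p ≤ (C.filter (fun i => p ∈ r i)).card := by
  intro p hp
  refine (hblocks p hp).trans ?_
  choose f hfC hfr hfI using hcover
  set s := P'.filter (fun q => q.1 = p) with hs
  rw [← Finset.card_attach (s := s)]
  have hmem : ∀ q : {x // x ∈ s}, q.1 ∈ P' ∧ q.1.1 = p := by
    intro q
    have := q.2
    exact Finset.mem_filter.mp this
  apply Finset.card_le_card_of_injOn (fun q => f q.1 (hmem q).1)
  · intro q _
    rw [Finset.mem_coe, Finset.mem_filter]
    refine ⟨hfC _ _, ?_⟩
    have h := hfr q.1 (hmem q).1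
    simpa [(hmem q).2] using h
  · intro q _ q' _ heq
    by_contra hne
    have hq1 : q.1 ≠ q'.1 := fun h => hne (Subtype.ext h)
    obtain ⟨hqP, hqp⟩ := hmem q
    obtain ⟨hq'P, hq'p⟩ := hmem q'
    have hIJ : q.1.2 ≠ q'.1.2 := by
      intro h
      exact hq1 (Prod.ext (hqp.trans hq'p.symm) h)
    have hdis := hdisj p hp q.1.2 q'.1.2 (by rw [← hqp]; exact hqP)
      (by rw [← hq'p]; exact hq'P) hIJ
    have h1 := hfI q.1 hqP
    have h2 := hfI q'.1 hq'P
    have heq' : f q.1 hqP = f q'.1 hq'P := heq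
    rw [heq'] at h1
    exact Finset.disjoint_left.mp hdis h1 h2
end
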